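/- The integral ∫₀¹ 1/(a₀ + a₁ s + a₂ s²) ds equals (1/a)·ln(1 + aθσ/((aθ+θ_m)(1-σ))). -/

import Mathlib

open Real intervalIntegral

/-- `∫₀¹ 1/(a₀ + a₁ s + a₂ s²) ds
  = (1/a) * log (1 + aθσ / ((aθ + θm) * (1 - σ)))`. -/
theorem dwell_time_integral
    (a θ θm σ : ℝ) (ha : 0 < a) (hθ : 0 < θ) (hθm : 0 < θm)
    (hσ : σ ∈ Set.Ioo (0 : ℝ) 1)
    (a₀ a₁ a₂ : ℝ)
    (ha₀ : a₀ = (a + θm * (1 - σ) / θ) * (1 - σ) / σ)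
    (ha₁ : a₁ = a + 2 * θm * (1 - σ) / θ)
    (ha₂ : a₂ = θm * σ / θ) :
    ∫ s in (0 : ℝ)..1, 1 / (a₀ + a₁ * s + a₂ * s ^ 2) =
      (1 / a) * Real.log (1 + a * θ * σ / ((a * θ + θm) * (1 - σ))) := by
  obtain ⟨hσ0, hσ1⟩ := hσ
  have h1σ : (0:ℝ) < 1 - σ := by linarith
  subst ha₀ ha₁ ha₂
  -- u s = 1 - σ + σ s
  have hu : ∀ s ∈ Set.Icc (0:ℝ) 1, 0 < 1 - σ + σ * s := by
    intro s hs
    nlinarith [hs.1, hs.2]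
  have hv : ∀ s ∈ Set.Icc (0:ℝ) 1, 0 < a * θ + θm * (1 - σ + σ * s) := by
    intro s hs
    have := hu s hs
    positivity
  have hQfac : ∀ s : ℝ,
      (a + θm * (1 - σ) / θ) * (1 - σ) / σ + (a + 2 * θm * (1 - σ) / θ) * s
        + θm * σ / θ * s ^ 2
      = (1 - σ + σ * s) * (a * θ + θm * (1 - σ + σ * s)) / (θ * σ) := by
    intro s
    field_simp
    ring
  have hQpos : ∀ s ∈ Set.Icc (0:ℝ) 1,
      0 < (a + θm * (1 - σ) / θ) * (1 - σ) / σ + (a + 2 * θm * (1 - σ) / θ) * s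
        + θm * σ / θ * s ^ 2 := by
    intro s hs
    rw [hQfac s]
    exact div_pos (mul_pos (hu s hs) (hv s hs)) (mul_pos hθ hσ0)
  set f : ℝ → ℝ := fun s => 1 / ((a + θm * (1 - σ) / θ) * (1 - σ) / σ
      + (a + 2 * θm * (1 - σ) / θ) * s + θm * σ / θ * s ^ 2) with hf
  set F : ℝ → ℝ := fun s => (1 / a) *
      (Real.log (1 - σ + σ * s) - Real.log (a * θ + θm * (1 - σ + σ * s))) with hF
  have huIcc : Set.uIcc (0:ℝ) 1 = Set.Icc (0:ℝ) 1 := by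
    rw [Set.uIcc_of_le]; norm_num
  have hderiv : ∀ s ∈ Set.uIcc (0:ℝ) 1, HasDerivAt F (f s) s := by
    intro s hs
    rw [huIcc] at hs
    have hus := hu s hs
    have hvs := hv s hs
    have h1 : HasDerivAt (fun s : ℝ => 1 - σ + σ * s) σ s := by
      simpa using ((hasDerivAt_id s).const_mul σ).const_add (1 - σ)
    have h2 : HasDerivAt (fun s : ℝ => a * θ + θm * (1 - σ + σ * s)) (θm * σ) s := by
      simpa using (h1.const_mul θm).const_add (a * θ)
    have hl1 : HasDerivAt (fun s : ℝ => Real.log (1 - σ + σ * s))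
        (σ / (1 - σ + σ * s)) s := h1.log hus.ne'
    have hl2 : HasDerivAt (fun s : ℝ => Real.log (a * θ + θm * (1 - σ + σ * s)))
        (θm * σ / (a * θ + θm * (1 - σ + σ * s))) s := h2.log hvs.ne'
    have := ((hl1.sub hl2).const_mul (1 / a))
    convert this using 1
    · rfl
    · rfl
    · rfl
    rw [hf]
    simp only
    rw [hQfac s]
    field_simp
    ring
  have hcont : IntervalIntegrable f MeasureTheory.volume 0 1 := by
    apply ContinuousOn.intervalIntegrable
    rw [huIcc]
    apply ContinuousOn.div continuousOn_const
    · fun_prop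
    · intro s hs
      exact (hQpos s hs).ne'
  have key := intervalIntegral.integral_eq_sub_of_hasDerivAt hderiv hcont
  calc ∫ s in (0:ℝ)..1, 1 / ((a + θm * (1 - σ) / θ) * (1 - σ) / σ
        + (a + 2 * θm * (1 - σ) / θ) * s + θm * σ / θ * s ^ 2)
      = F 1 - F 0 := key
    _ = (1 / a) * Real.log (1 + a * θ * σ / ((a * θ + θm) * (1 - σ))) := by
        have hA : (0:ℝ) < a * θ + θm := by positivity
        have hB : (0:ℝ) < a * θ + θm * (1 - σ) := by positivity
        have harg : 1 + a * θ * σ / ((a * θ + θm) * (1 - σ))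
            = (a * θ + θm * (1 - σ)) / ((a * θ + θm) * (1 - σ)) := by
          field_simp
          ring
        rw [hF, harg]
        simp only
        rw [Real.log_div hB.ne' (mul_pos hA h1σ).ne',
          Real.log_mul hA.ne' h1σ.ne']
        norm_num
        ring
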